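/- (Isostatic Substitution Principle.) Let V be a finite type, p : V → ℝ³, and V' ⊆ V. Let E₀ be a set of edges on V, and let E' and E'' be sets of edges with both endpoints in V', with E₀ disjoint from E' ∪ E''. Suppose that the subframeworks (V', E', p|V') and (V', E'', p|V') are both isostatic. Then: (a) the span in V → ℝ³ of the bar loads of the edges of E₀ ∪ E' equals the span of the bar loads of the edges of E₀ ∪ E'' (the two frameworks have the same space of resolvable loads); and (b) the space of self-stresses of the framework ((V, E₀ ∪ E'), p) and the space of self-stresses of the framework ((V, E₀ ∪ E''), p) have the same finite dimension. -/

import Mathlib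

open Matrix

/-- The space of equilibrium loads on a finite configuration `p : V → ℝ³`. -/
def eqLoads (V : Type*) [Fintype V] (p : V → Fin 3 → ℝ) :
    Submodule ℝ (V → Fin 3 → ℝ) where
  carrier := {f | (∑ i, f i) = 0 ∧ (∑ i, (p i) ⨯₃ (f i)) = 0}
  zero_mem' := by simp
  add_mem' := by
    rintro f g ⟨hf1, hf2⟩ ⟨hg1, hg2⟩
    constructor
    · simp only [Pi.add_apply, Finset.sum_add_distrib, hf1, hg1, add_zero]
    · simp only [Pi.add_apply, map_add, Finset.sum_add_distrib, hf2, hg2, add_zero]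
  smul_mem' := by
    rintro c f ⟨hf1, hf2⟩
    constructor
    · simp only [Pi.smul_apply, ← Finset.smul_sum, hf1, smul_zero]
    · simp only [Pi.smul_apply, _root_.map_smul, ← Finset.smul_sum, hf2, smul_zero]

/-- The bar load of the edge `{i, j}`. -/
def barLoad {V : Type*} [DecidableEq V] (p : V → Fin 3 → ℝ) : Sym2 V → (V → Fin 3 → ℝ) :=
  Sym2.lift ⟨fun i j k => if k = i then p i - p j else if k = j then p j - p i else 0,
    by
      intro i j
      funext k
      by_cases hi : k = i <;> by_cases hj : k = j <;> simp_all⟩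

/-- A framework with edge set `E` is isostatic when the family of its bar loads is
linearly independent and spans the space of equilibrium loads. -/
def IsIsostatic {V : Type*} [Fintype V] [DecidableEq V]
    (E : Finset (Sym2 V)) (p : V → Fin 3 → ℝ) : Prop :=
  LinearIndependent ℝ (fun e : E => barLoad p (e : Sym2 V)) ∧
  Submodule.span ℝ (barLoad p '' (E : Set (Sym2 V))) = eqLoads V p

/-- The space of self-stresses of the framework with edge set `E` and configuration `p`:
scalars on the edges, vanishing off `E`, in equilibrium at every vertex. -/
def stressSpace {V : Type*} [Fintype V] [DecidableEq V]
    (E : Finset (Sym2 V)) (p : V → Fin 3 → ℝ) : Submodule ℝ (Sym2 V → ℝ) where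
  carrier := {lam | (∀ e ∉ E, lam e = 0) ∧
    ∀ i : V, ∑ j ∈ Finset.univ.filter (fun j => s(i, j) ∈ E), lam s(i, j) • (p j - p i) = 0}
  zero_mem' := by simp
  add_mem' := by
    rintro f g ⟨hf0, hf⟩ ⟨hg0, hg⟩
    constructor
    · intro e he; simp [hf0 e he, hg0 e he]
    · intro i
      simp only [Pi.add_apply, add_smul, Finset.sum_add_distrib, hf i, hg i, add_zero]
  smul_mem' := by
    rintro c f ⟨hf0, hf⟩
    constructor
    · intro e he; simp [hf0 e he]
    · intro i
      simp only [Pi.smul_apply, smul_eq_mul, SemigroupAction.mul_smul, ← Finset.smul_sum, hf i,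
        smul_zero]


section Aux

variable {V : Type*} [Fintype V] [DecidableEq V]

private lemma barLoad_mk (p : V → Fin 3 → ℝ) (a b k : V) :
    barLoad p s(a, b) k =
      if k = a then p a - p b else if k = b then p b - p a else 0 := rfl

private lemma key_sum (p : V → Fin 3 → ℝ) (E : Finset (Sym2 V)) (lam : Sym2 V → ℝ) (i : V) :
    ∑ e ∈ E, lam e • barLoad p e i =
      ∑ j ∈ Finset.univ.filter (fun j => s(i, j) ∈ E), lam s(i, j) • (p i - p j) := by
  have hinj : ∀ j ∈ Finset.univ.filter (fun j => s(i, j) ∈ E),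
      ∀ j' ∈ Finset.univ.filter (fun j => s(i, j) ∈ E),
      s(i, j) = s(i, j') → j = j' := by
    intro j _ j' _ h
    rw [Sym2.eq_iff] at h
    rcases h with ⟨-, h⟩ | ⟨h1, h2⟩
    · exact h
    · rw [h2, h1]
  have himg : (Finset.univ.filter (fun j => s(i, j) ∈ E)).image (fun j => s(i, j)) ⊆ E := by
    intro e he
    obtain ⟨j, hj, rfl⟩ := Finset.mem_image.1 he
    exact (Finset.mem_filter.1 hj).2
  have h0 : ∀ e ∈ E,
      e ∉ (Finset.univ.filter (fun j => s(i, j) ∈ E)).image (fun j => s(i, j)) →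
      lam e • barLoad p e i = 0 := by
    intro e heE hne
    induction e using Sym2.ind with
    | _ a b =>
      have ha : i ≠ a := by
        rintro rfl
        exact hne (Finset.mem_image.2 ⟨b, Finset.mem_filter.2 ⟨Finset.mem_univ _, heE⟩, rfl⟩)
      have hb : i ≠ b := by
        rintro rfl
        refine hne (Finset.mem_image.2 ⟨a, Finset.mem_filter.2 ⟨Finset.mem_univ _, ?_⟩, ?_⟩)
        · rw [Sym2.eq_swap]; exact heE
        · rw [Sym2.eq_swap]
      simp [barLoad_mk, ha, hb]
  rw [← Finset.sum_subset himg h0, Finset.sum_image hinj]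
  refine Finset.sum_congr rfl fun j _ => ?_
  congr 1
  simp [barLoad_mk]

private lemma stress_cond (p : V → Fin 3 → ℝ) (E : Finset (Sym2 V)) (lam : Sym2 V → ℝ) (i : V) :
    ∑ j ∈ Finset.univ.filter (fun j => s(i, j) ∈ E), lam s(i, j) • (p j - p i)
      = -∑ e ∈ E, lam e • barLoad p e i := by
  rw [key_sum, ← Finset.sum_neg_distrib]
  refine Finset.sum_congr rfl fun j _ => ?_
  rw [← smul_neg, neg_sub]

private lemma mem_stressSpace_iff {E : Finset (Sym2 V)} {p : V → Fin 3 → ℝ} {lam : Sym2 V → ℝ} :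
    lam ∈ stressSpace E p ↔ (∀ e ∉ E, lam e = 0) ∧
      ∀ i : V, ∑ j ∈ Finset.univ.filter (fun j => s(i, j) ∈ E),
        lam s(i, j) • (p j - p i) = 0 :=
  Iff.rfl

/-- Restriction of a stress to the edge set. -/
private def restrictMap (p : V → Fin 3 → ℝ) (E : Finset (Sym2 V)) :
    stressSpace E p →ₗ[ℝ] (↥E → ℝ) where
  toFun lam e := lam.1 e
  map_add' _ _ := rfl
  map_smul' _ _ := rfl

private lemma restrictMap_inj (p : V → Fin 3 → ℝ) (E : Finset (Sym2 V)) :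
    Function.Injective (restrictMap p E) := by
  intro lam mu h
  ext e
  by_cases he : e ∈ E
  · exact congrFun h ⟨e, he⟩
  · rw [(mem_stressSpace_iff.1 lam.2).1 e he, (mem_stressSpace_iff.1 mu.2).1 e he]

private lemma restrictMap_range (p : V → Fin 3 → ℝ) (E : Finset (Sym2 V)) :
    LinearMap.range (restrictMap p E) =
      LinearMap.ker (Fintype.linearCombination ℝ (fun e : ↥E => barLoad p (e : Sym2 V))) := by
  ext mu
  simp only [LinearMap.mem_range, LinearMap.mem_ker, Fintype.linearCombination_apply]
  constructor
  · rintro ⟨lam, rfl⟩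
    funext i
    rw [Finset.sum_apply]
    have : ∑ e : ↥E, (restrictMap p E lam e • barLoad p (e : Sym2 V)) i
        = ∑ e ∈ E, lam.1 e • barLoad p e i := by
      rw [← Finset.sum_coe_sort E (fun e => lam.1 e • barLoad p e i)]
      rfl
    rw [this]
    have h := (mem_stressSpace_iff.1 lam.2).2 i
    rw [stress_cond] at h
    simpa [neg_eq_zero] using h
  · intro hmu
    refine ⟨⟨fun e => if h : e ∈ E then mu ⟨e, h⟩ else 0, ?_⟩, ?_⟩
    · refine mem_stressSpace_iff.2 ⟨fun e he => dif_neg he, fun i => ?_⟩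
      refine (stress_cond p E (fun e => if h : e ∈ E then mu ⟨e, h⟩ else 0) i).trans ?_
      show -∑ e ∈ E, (if h : e ∈ E then mu ⟨e, h⟩ else 0) • barLoad p e i = 0
      rw [neg_eq_zero]
      have : ∑ e ∈ E, (if h : e ∈ E then mu ⟨e, h⟩ else 0) • barLoad p e i
          = ∑ e : ↥E, mu e • barLoad p (e : Sym2 V) i := by
        rw [← Finset.sum_coe_sort E
          (fun e => (if h : e ∈ E then mu ⟨e, h⟩ else 0) • barLoad p e i)]
        refine Finset.sum_congr rfl fun e _ => ?_
        rw [dif_pos e.2]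
      rw [this]
      have := congrFun hmu i
      rw [Finset.sum_apply] at this
      simpa using this
    · funext e
      exact dif_pos e.2

private lemma finrank_stress (p : V → Fin 3 → ℝ) (E : Finset (Sym2 V)) :
    Module.finrank ℝ (stressSpace E p) +
      Module.finrank ℝ (Submodule.span ℝ (barLoad p '' (E : Set (Sym2 V)))) = E.card := by
  set L := Fintype.linearCombination ℝ (fun e : ↥E => barLoad p (e : Sym2 V)) with hL
  have h1 : Module.finrank ℝ (stressSpace E p) = Module.finrank ℝ (LinearMap.ker L) := by
    rw [← restrictMap_range p E, LinearMap.finrank_range_of_inj (restrictMap_inj p E)]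
  have h2 : LinearMap.range L = Submodule.span ℝ (barLoad p '' (E : Set (Sym2 V))) := by
    rw [hL, Fintype.range_linearCombination]
    congr 1
    ext x
    simp
  have h3 := LinearMap.finrank_range_add_finrank_ker L
  rw [h2, Module.finrank_fintype_fun_eq_card, Fintype.card_coe] at h3
  omega

/-- Extension by zero of a configuration of loads on a vertex subset. -/
private def extMap (V' : Finset V) : (↥V' → Fin 3 → ℝ) →ₗ[ℝ] (V → Fin 3 → ℝ) where
  toFun g v := if h : v ∈ V' then g ⟨v, h⟩ else 0
  map_add' g h := by funext v; by_cases hv : v ∈ V' <;> simp [hv]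
  map_smul' c g := by funext v; by_cases hv : v ∈ V' <;> simp [hv]

private lemma barLoad_map (p : V → Fin 3 → ℝ) (V' : Finset V) (e : Sym2 ↥V') :
    barLoad p (Sym2.map ((↑·) : ↥V' → V) e) =
      extMap V' (barLoad (fun v : ↥V' => p v) e) := by
  induction e using Sym2.ind with
  | _ a b =>
    funext k
    rw [Sym2.map_pair_eq]
    show barLoad p s((a : V), (b : V)) k = (if h : k ∈ V' then barLoad _ s(a, b) ⟨k, h⟩ else 0)
    by_cases hk : k ∈ V'
    · rw [dif_pos hk, barLoad_mk, barLoad_mk]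
      have h1 : (k = (a : V)) ↔ ((⟨k, hk⟩ : ↥V') = a) :=
        ⟨fun h => Subtype.ext h, fun h => congrArg Subtype.val h⟩
      have h2 : (k = (b : V)) ↔ ((⟨k, hk⟩ : ↥V') = b) :=
        ⟨fun h => Subtype.ext h, fun h => congrArg Subtype.val h⟩
      simp only [h1, h2]
    · have h1 : k ≠ (a : V) := fun h => hk (h ▸ a.2)
      have h2 : k ≠ (b : V) := fun h => hk (h ▸ b.2)
      rw [dif_neg hk, barLoad_mk, if_neg h1, if_neg h2]

private lemma span_img (p : V → Fin 3 → ℝ) (V' : Finset V)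
    (E' : Finset (Sym2 ↥V')) (hiso : IsIsostatic E' (fun v : ↥V' => p v)) :
    Submodule.span ℝ
        (barLoad p '' ((E'.image (Sym2.map ((↑·) : ↥V' → V))) : Finset (Sym2 V))) =
      Submodule.map (extMap V') (eqLoads ↥V' (fun v : ↥V' => p v)) := by
  rw [Finset.coe_image, ← Set.image_comp]
  have h : (barLoad p ∘ Sym2.map ((↑·) : ↥V' → V)) =
      (⇑(extMap (V := V) V') ∘ barLoad (fun v : ↥V' => p v)) := by
    funext e; exact barLoad_map p V' e
  rw [h, Set.image_comp, Submodule.span_image, hiso.2]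

private lemma card_iso {W : Type*} [Fintype W] [DecidableEq W]
    (q : W → Fin 3 → ℝ) (E : Finset (Sym2 W)) (hiso : IsIsostatic E q) :
    E.card = Module.finrank ℝ (eqLoads W q) := by
  have h := finrank_span_eq_card hiso.1
  have hr : Set.range (fun e : ↥E => barLoad q (e : Sym2 W)) = barLoad q '' ↑E := by
    ext x
    constructor
    · rintro ⟨e, rfl⟩; exact ⟨e, e.2, rfl⟩
    · rintro ⟨e, he, rfl⟩; exact ⟨⟨e, he⟩, rfl⟩
  rw [hr, hiso.2] at h
  rw [← Fintype.card_coe, ← h]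

end Aux

/-- Isostatic Substitution Principle: replacing an isostatic subframework on the vertex set
`V'` by another isostatic subframework on the same vertices leaves the span of the bar
loads (the resolvable loads) unchanged and preserves the dimension of the space of
self-stresses. -/
theorem isostatic_substitution {V : Type*} [Fintype V] [DecidableEq V]
    (p : V → Fin 3 → ℝ) (V' : Finset V)
    (E₀ : Finset (Sym2 V)) (E' E'' : Finset (Sym2 ↥V'))
    (hdisj : Disjoint E₀
      (E'.image (Sym2.map (↑· : ↥V' → V)) ∪ E''.image (Sym2.map (↑· : ↥V' → V))))
    (hframe₀ : ∀ i j : V, s(i, j) ∈ E₀ → p i ≠ p j)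
    (hframe' : ∀ i j : ↥V', s(i, j) ∈ E' → p i ≠ p j)
    (hframe'' : ∀ i j : ↥V', s(i, j) ∈ E'' → p i ≠ p j)
    (hiso' : IsIsostatic E' (fun v : ↥V' => p v))
    (hiso'' : IsIsostatic E'' (fun v : ↥V' => p v)) :
    Submodule.span ℝ
        (barLoad p '' ((E₀ ∪ E'.image (Sym2.map (↑· : ↥V' → V))) : Finset (Sym2 V))) =
      Submodule.span ℝ
        (barLoad p '' ((E₀ ∪ E''.image (Sym2.map (↑· : ↥V' → V))) : Finset (Sym2 V))) ∧
    Module.finrank ℝ (stressSpace (E₀ ∪ E'.image (Sym2.map (↑· : ↥V' → V))) p) =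
      Module.finrank ℝ (stressSpace (E₀ ∪ E''.image (Sym2.map (↑· : ↥V' → V))) p) := by
  have hspan :
      Submodule.span ℝ
          (barLoad p '' ((E₀ ∪ E'.image (Sym2.map ((↑·) : ↥V' → V))) : Finset (Sym2 V))) =
        Submodule.span ℝ
          (barLoad p '' ((E₀ ∪ E''.image (Sym2.map ((↑·) : ↥V' → V))) : Finset (Sym2 V))) := by
    rw [Finset.coe_union, Finset.coe_union, Set.image_union, Set.image_union,
      Submodule.span_union, Submodule.span_union, span_img p V' E' hiso',
      span_img p V' E'' hiso'']
  refine ⟨hspan, ?_⟩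
  have hinj : Function.Injective (Sym2.map ((↑·) : ↥V' → V)) :=
    Sym2.map.injective Subtype.coe_injective
  obtain ⟨hd', hd''⟩ := Finset.disjoint_union_right.1 hdisj
  have hc' : (E₀ ∪ E'.image (Sym2.map ((↑·) : ↥V' → V))).card = E₀.card + E'.card := by
    rw [Finset.card_union_of_disjoint hd', Finset.card_image_of_injective _ hinj]
  have hc'' : (E₀ ∪ E''.image (Sym2.map ((↑·) : ↥V' → V))).card = E₀.card + E''.card := by
    rw [Finset.card_union_of_disjoint hd'', Finset.card_image_of_injective _ hinj]
  have hE : E'.card = E''.card := by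
    rw [card_iso (fun v : ↥V' => p v) E' hiso', card_iso (fun v : ↥V' => p v) E'' hiso'']
  have h1 := finrank_stress p (E₀ ∪ E'.image (Sym2.map ((↑·) : ↥V' → V)))
  have h2 := finrank_stress p (E₀ ∪ E''.image (Sym2.map ((↑·) : ↥V' → V)))
  rw [hspan] at h1
  rw [hc'] at h1
  rw [hc''] at h2
  omega
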